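/- The matrix B is invertible over ℚ with (B^{-1})_{ij} = min(i,j), and the matrix B(q) is invertible over ℂ(q) with inverse B̃(q) the symmetric n×n matrix whose entries for j ≤ i are: B̃(q)_{ij} = [j]_q/([n]_q − [n−1]_q) if i = n, and B̃(q)_{ij} = [j]_q·([n−i]_q − [n−i−1]_q)/([n]_q − [n−1]_q) if j ≤ i < n. -/

import Mathlib

/-!
STATEMENT 14: for the type `B_n` symmetrized Cartan matrix `B = [(α_i,α_j)]`,
`B` is invertible over `ℚ` with `(B⁻¹)_{ij} = min(i,j)`, and the q-number matrix
`B(q) = [[B_{ij}]_q]` is invertible over `ℂ(q)` with the explicit symmetric inverse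
`B̃(q)` described in the paper.
-/

noncomputable section

/-- The field `ℂ(q)`. -/
abbrev Kq : Type := RatFunc ℂ

/-- The indeterminate `q`. -/
def qv : Kq := RatFunc.X

/-- The q-number `[m]_q = (q^m − q^{-m})/(q − q^{-1})`. -/
def qnum (m : ℤ) : Kq := (qv ^ m - qv ^ (-m)) / (qv - qv⁻¹)

/-- The symmetrized Cartan matrix entries `B_{ij} = (α_i,α_j)` of type `B_n` (0-based
indices): `B_{ii} = 2` for `i < n`, `B_{nn} = 1`, `B_{i,i+1} = B_{i+1,i} = −1`, else `0`. -/
def symB (n : ℕ) (i j : Fin n) : ℤ :=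
  if i = j then (if (i : ℕ) + 1 = n then 1 else 2)
  else if (i : ℕ) + 1 = (j : ℕ) ∨ (j : ℕ) + 1 = (i : ℕ) then -1
  else 0

/-- The claimed rational inverse: `(B⁻¹)_{ij} = min(i,j)` (1-based). -/
def BinvB (n : ℕ) (i j : Fin n) : ℚ :=
  (min (i : ℕ) (j : ℕ) : ℚ) + 1

/-- The claimed inverse `B̃(q)` of `B(q)` in type `B_n` (with `a = min(i,j)`,
`b = max(i,j)` the 1-based indices):
`[a]_q/([n]_q−[n−1]_q)` if `b = n`, and
`[a]_q([n−b]_q−[n−b−1]_q)/([n]_q−[n−1]_q)` if `b < n`. -/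
def BtqB (n : ℕ) (i j : Fin n) : Kq :=
  if (max (i : ℕ) (j : ℕ) : ℤ) + 1 = n then
    qnum ((min (i : ℕ) (j : ℕ) : ℤ) + 1) / (qnum n - qnum ((n : ℤ) - 1))
  else
    qnum ((min (i : ℕ) (j : ℕ) : ℤ) + 1) *
        (qnum ((n : ℤ) - ((max (i : ℕ) (j : ℕ) : ℤ) + 1)) -
          qnum ((n : ℤ) - ((max (i : ℕ) (j : ℕ) : ℤ) + 1) - 1)) /
      (qnum n - qnum ((n : ℤ) - 1))

/-! ### Auxiliary lemmas -/

lemma qv_ne : qv ≠ 0 := RatFunc.X_ne_zero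

lemma poly_ne (p : Polynomial ℂ) (hp : p ≠ 0) : algebraMap (Polynomial ℂ) Kq p ≠ 0 := by
  simpa using hp

lemma sub_ne : qv - qv⁻¹ ≠ 0 := by
  intro h
  have h2 : qv ^ 2 - 1 = 0 := by
    have := sub_eq_zero.mp h
    field_simp [qv_ne] at this
    rw [this]; ring
  have h3 : algebraMap (Polynomial ℂ) Kq (Polynomial.X ^ 2 - 1) = 0 := by
    simpa [qv, map_sub, map_pow] using h2
  exact poly_ne _ (by intro hc; have := congrArg (Polynomial.eval 0) hc; simp at this) h3

lemma qnum_zero : qnum 0 = 0 := by simp [qnum]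

lemma qnum_one : qnum 1 = 1 := by
  simp only [qnum, zpow_one, zpow_neg]
  rw [div_eq_one_iff_eq sub_ne]

lemma qnum_neg (m : ℤ) : qnum (-m) = -qnum m := by
  simp only [qnum, neg_neg, neg_div]
  ring

/-- The denominator `[n]_q − [n−1]_q`. -/
def Dq (n : ℕ) : Kq := qnum n - qnum ((n : ℤ) - 1)

lemma Dq_ne (n : ℕ) (hn : 1 ≤ n) : Dq n ≠ 0 := by
  intro h
  have hq := qv_ne
  have hnum : qv ^ (n : ℤ) - qv ^ (-(n:ℤ)) - (qv ^ ((n:ℤ)-1) - qv ^ (-((n:ℤ)-1))) = 0 := by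
    have := h
    unfold Dq qnum at this
    rw [div_sub_div_same, div_eq_zero_iff] at this
    rcases this with h1 | h1
    · linear_combination h1
    · exact absurd h1 sub_ne
  have hmul : qv ^ ((2*n : ℕ) : ℤ) - 1 - qv ^ ((2*n-1 : ℕ) : ℤ) + qv = 0 := by
    have := congrArg (· * qv ^ (n:ℤ)) hnum
    simp only [sub_mul, zero_mul] at this
    rw [← zpow_add₀ hq, ← zpow_add₀ hq, ← zpow_add₀ hq] at this
    have e1 : (-(n:ℤ)) + n = 0 := by ring
    have e2 : ((n:ℤ) - 1) + n = ((2*n-1 : ℕ) : ℤ) := by omega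
    have e3 : (-((n:ℤ)-1)) + n = 1 := by ring
    have e4 : (n:ℤ) + n = ((2*n : ℕ):ℤ) := by push_cast; ring
    rw [← zpow_add₀ hq (-((n:ℤ)-1)) n, e1, e2, e3, e4, zpow_zero, zpow_one] at this
    linear_combination this
  rw [zpow_natCast, zpow_natCast] at hmul
  have h3 : algebraMap (Polynomial ℂ) Kq
      (Polynomial.X ^ (2*n) - 1 - Polynomial.X ^ (2*n-1) + Polynomial.X) = 0 := by
    simpa [qv, map_sub, map_add, map_pow] using hmul
  refine poly_ne _ ?_ h3
  intro hc
  have := congrArg (Polynomial.eval 0) hc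
  simp only [Polynomial.eval_add, Polynomial.eval_sub, Polynomial.eval_pow,
    Polynomial.eval_X, Polynomial.eval_one, Polynomial.eval_zero] at this
  rw [zero_pow (by omega : 2*n ≠ 0), zero_pow (by omega : 2*n-1 ≠ 0)] at this
  norm_num at this

lemma qnum_key (x y : ℤ) :
    qnum (x+1) * qnum y - qnum x * qnum (y-1) = qnum (x+y) := by
  have hq := qv_ne
  have hs := sub_ne
  have ha : qv ^ x ≠ 0 := zpow_ne_zero _ hq
  have hb : qv ^ y ≠ 0 := zpow_ne_zero _ hq
  have key : (qv^(x+1) - qv^(-(x+1))) * (qv^y - qv^(-y))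
      - (qv^x - qv^(-x)) * (qv^(y-1) - qv^(-(y-1)))
      = (qv^(x+y) - qv^(-(x+y))) * (qv - qv⁻¹) := by
    simp only [neg_add, neg_sub, neg_neg, zpow_add₀ hq, zpow_sub₀ hq, zpow_one, zpow_neg]
    field_simp
    ring
  unfold qnum
  rw [div_mul_div_comm, div_mul_div_comm, ← sub_div, key, ← mul_div_mul_right
    (qv ^ (x+y) - qv ^ (-(x+y))) ((qv - qv⁻¹)) sub_ne]

lemma qnum_two_mul (m : ℤ) : qnum 2 * qnum m = qnum (m+1) + qnum (m-1) := by
  have h := qnum_key 1 m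
  rw [qnum_one, one_mul] at h
  rw [show (1:ℤ)+1 = 2 by ring, show (1:ℤ)+m = m+1 by ring] at h
  linear_combination h

/-- The numerator of the extension of `B̃(q)` to integer indices. -/
def Gz (n : ℕ) (j t : ℤ) : Kq :=
  qnum (min t j + 1) * (qnum ((n:ℤ) - max t j - 1) - qnum ((n:ℤ) - max t j - 2))

/-- The extension of `B̃(q)` to integer indices. -/
def Cz (n : ℕ) (j t : ℤ) : Kq := Gz n j t / Dq n

lemma masterG (n : ℕ) (i j : ℤ) (hj0 : 0 ≤ j) (hj : j < n) :
    qnum 2 * Gz n j i - Gz n j (i-1) - Gz n j (i+1) = if i = j then Dq n else 0 := by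
  unfold Gz Dq
  rcases lt_trichotomy i j with hij | hij | hij
  · rw [if_neg (by omega)]
    rw [min_eq_left (by omega), min_eq_left (by omega), min_eq_left (by omega),
        max_eq_right (by omega : i ≤ j), max_eq_right (by omega : i-1 ≤ j),
        max_eq_right (by omega : i+1 ≤ j)]
    rw [show i-1+1 = i by ring, show i+1+1 = i+2 by ring]
    have h2 := qnum_two_mul (i+1)
    rw [show i+1+1 = i+2 by ring, show i+1-1 = i by ring] at h2
    linear_combination h2 * (qnum ((n:ℤ) - j - 1) - qnum ((n:ℤ) - j - 2))
  · subst hij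
    rw [if_pos rfl]
    rw [min_self, min_eq_left (by omega : i-1 ≤ i), min_eq_right (by omega : i ≤ i+1),
        max_self, max_eq_right (by omega : i-1 ≤ i), max_eq_left (by omega : i ≤ i+1)]
    rw [show i-1+1 = i by ring, show (n:ℤ) - (i+1) - 1 = (n:ℤ) - i - 2 by ring,
        show (n:ℤ) - (i+1) - 2 = (n:ℤ) - i - 3 by ring]
    have h2 := qnum_two_mul (i+1)
    rw [show i+1+1 = i+2 by ring, show i+1-1 = i by ring] at h2
    have k1 := qnum_key (i+1) ((n:ℤ)-i-1)
    rw [show i+1+1 = i+2 by ring, show (n:ℤ)-i-1-1 = (n:ℤ)-i-2 by ring,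
        show i+1+((n:ℤ)-i-1) = (n:ℤ) by ring] at k1
    have k2 := qnum_key (i+1) ((n:ℤ)-i-2)
    rw [show i+1+1 = i+2 by ring, show (n:ℤ)-i-2-1 = (n:ℤ)-i-3 by ring,
        show i+1+((n:ℤ)-i-2) = (n:ℤ)-1 by ring] at k2
    linear_combination h2 * (qnum ((n:ℤ) - i - 1) - qnum ((n:ℤ) - i - 2)) + k1 - k2
  · rw [if_neg (by omega)]
    rw [min_eq_right (by omega : j ≤ i), min_eq_right (by omega : j ≤ i-1),
        min_eq_right (by omega : j ≤ i+1),
        max_eq_left (by omega : j ≤ i), max_eq_left (by omega : j ≤ i-1),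
        max_eq_left (by omega : j ≤ i+1)]
    rw [show (n:ℤ) - (i-1) - 1 = (n:ℤ) - i by ring,
        show (n:ℤ) - (i-1) - 2 = (n:ℤ) - i - 1 by ring,
        show (n:ℤ) - (i+1) - 1 = (n:ℤ) - i - 2 by ring,
        show (n:ℤ) - (i+1) - 2 = (n:ℤ) - i - 3 by ring]
    have h2 := qnum_two_mul ((n:ℤ)-i-1)
    rw [show (n:ℤ)-i-1+1 = (n:ℤ)-i by ring, show (n:ℤ)-i-1-1 = (n:ℤ)-i-2 by ring] at h2
    have h3 := qnum_two_mul ((n:ℤ)-i-2)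
    rw [show (n:ℤ)-i-2+1 = (n:ℤ)-i-1 by ring, show (n:ℤ)-i-2-1 = (n:ℤ)-i-3 by ring] at h3
    linear_combination qnum (j+1) * (h2 - h3)

lemma masterC (n : ℕ) (hn : 1 ≤ n) (i j : ℤ) (hj0 : 0 ≤ j) (hj : j < n) :
    qnum 2 * Cz n j i - Cz n j (i+1) - Cz n j (i-1) = if i = j then 1 else 0 := by
  unfold Cz
  rw [← mul_div_assoc, ← sub_div, ← sub_div,
    show qnum 2 * Gz n j i - Gz n j (i+1) - Gz n j (i-1)
      = qnum 2 * Gz n j i - Gz n j (i-1) - Gz n j (i+1) from by ring,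
    masterG n i j hj0 hj]
  split_ifs
  · exact div_self (Dq_ne n hn)
  · exact zero_div _

lemma sum_delta_nat {R : Type*} [AddCommMonoid R] (n m : ℕ) (f : Fin n → R) :
    ∑ k : Fin n, (if (k : ℕ) = m then f k else 0)
      = if h : m < n then f ⟨m, h⟩ else 0 := by
  split_ifs with h
  · rw [Finset.sum_congr rfl (fun k _ =>
      if_congr (by simp [Fin.ext_iff]) rfl rfl : ∀ (k : Fin n), k ∈ Finset.univ →
        (if (k:ℕ) = m then f k else 0) = if k = (⟨m, h⟩ : Fin n) then f k else 0)]
    simp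
  · exact Finset.sum_eq_zero fun k _ => if_neg (by omega)

lemma sum_tri {R : Type*} [CommRing R] (c : ℤ → R) (hc0 : c 0 = 0) (hcm1 : c (-1) = -1)
    (n : ℕ) (g : ℤ → R) (hg0 : g (-1) = 0)
    (hgn : g n = (c 2 - c 1) * g ((n:ℤ)-1)) (i : Fin n) :
    ∑ k : Fin n, c (symB n i k) * g (k : ℤ)
      = c 2 * g (i : ℤ) - g ((i:ℤ)+1) - g ((i:ℤ)-1) := by
  have hsplit : ∀ k : Fin n, c (symB n i k) * g (k : ℤ)
      = (if k = i then c (if (i:ℕ)+1 = n then 1 else 2) * g (k : ℤ) else 0)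
      + ((if (k:ℕ) = (i:ℕ)+1 then -g (k : ℤ) else 0)
      + (if (k:ℕ)+1 = (i:ℕ) then -g (k : ℤ) else 0)) := by
    intro k
    unfold symB
    simp only [Fin.ext_iff]
    split_ifs <;> first
      | omega
      | (simp_all [hc0, hcm1]; try ring)
  rw [Finset.sum_congr rfl (fun k _ => hsplit k), Finset.sum_add_distrib,
    Finset.sum_ite_eq' Finset.univ i, Finset.sum_add_distrib, sum_delta_nat]
  have h3 : (∑ k : Fin n, if (k:ℕ)+1 = (i:ℕ) then -g (k : ℤ) else 0)
      = if (i:ℕ) = 0 then 0 else g ((i:ℤ)-1) * (-1) := by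
    by_cases hi0 : (i:ℕ) = 0
    · rw [if_pos hi0]
      exact Finset.sum_eq_zero fun k _ => if_neg (by omega)
    · rw [if_neg hi0]
      rw [Finset.sum_congr rfl (fun k _ =>
        if_congr (by omega) rfl rfl : ∀ (k : Fin n), k ∈ Finset.univ →
          (if (k:ℕ)+1 = (i:ℕ) then -g (k:ℤ) else 0)
            = if (k:ℕ) = (i:ℕ)-1 then -g (k:ℤ) else 0),
        sum_delta_nat]
      rw [dif_pos (by omega : (i:ℕ)-1 < n)]
      have : (((i:ℕ)-1 : ℕ) : ℤ) = (i:ℤ)-1 := by omega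
      simp [this]
  rw [h3]
  simp only [Finset.mem_univ, if_pos]
  by_cases hlast : (i:ℕ)+1 = n
  · rw [if_pos hlast, dif_neg (by omega)]
    have hiv : ((i:ℕ):ℤ) = (n:ℤ)-1 := by omega
    have hgn' : g ((i:ℤ)+1) = (c 2 - c 1) * g (i:ℤ) := by
      rw [show (i:ℤ)+1 = (n:ℤ) by omega, hgn, ← hiv]
    rw [hgn']
    by_cases hi0 : (i:ℕ) = 0
    · rw [if_pos hi0]
      have : g ((i:ℤ)-1) = 0 := by rw [show (i:ℤ)-1 = -1 by omega]; exact hg0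
      rw [this]; ring
    · rw [if_neg hi0]; ring
  · rw [if_neg hlast, dif_pos (by omega : (i:ℕ)+1 < n)]
    have : ((((i:ℕ)+1 : ℕ)) : ℤ) = (i:ℤ)+1 := by push_cast; ring
    by_cases hi0 : (i:ℕ) = 0
    · rw [if_pos hi0]
      have h0 : g ((i:ℤ)-1) = 0 := by rw [show (i:ℤ)-1 = -1 by omega]; exact hg0
      simp [this, h0]
      ring
    · rw [if_neg hi0]
      simp [this]
      ring

/-! boundary values of `Cz` -/

lemma Cz_neg_one (n : ℕ) (j : ℤ) (hj : 0 ≤ j) : Cz n j (-1) = 0 := by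
  unfold Cz Gz
  rw [min_eq_left (by omega), show (-1:ℤ)+1 = 0 by ring, qnum_zero, zero_mul, zero_div]

lemma Cz_top (n : ℕ) (j : ℤ) (hj : j ≤ (n:ℤ)-1) :
    Cz n j (n:ℤ) = (qnum 2 - qnum 1) * Cz n j ((n:ℤ)-1) := by
  unfold Cz Gz
  rw [min_eq_right (by omega : j ≤ (n:ℤ)), max_eq_left (by omega : j ≤ (n:ℤ)),
      min_eq_right hj, max_eq_left hj,
      show (n:ℤ) - (n:ℤ) - 1 = -1 by ring, show (n:ℤ) - (n:ℤ) - 2 = -2 by ring,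
      show (n:ℤ) - ((n:ℤ)-1) - 1 = 0 by ring, show (n:ℤ) - ((n:ℤ)-1) - 2 = -1 by ring,
      qnum_zero, qnum_neg 1, qnum_neg 2, qnum_one]
  ring_nf

lemma BtqB_eq_Cz (n : ℕ) (i j : Fin n) : BtqB n i j = Cz n (j:ℤ) (i:ℤ) := by
  unfold BtqB Cz Gz Dq
  have hmin : (min (i:ℕ) (j:ℕ) : ℤ) = min ((i:ℕ):ℤ) ((j:ℕ):ℤ) := by
    simp [Nat.cast_min]
  have hmax : (max (i:ℕ) (j:ℕ) : ℤ) = max ((i:ℕ):ℤ) ((j:ℕ):ℤ) := by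
    simp [Nat.cast_max]
  split_ifs with h
  · rw [hmin] at *
    rw [show ((n:ℤ) - max ((i:ℕ):ℤ) ((j:ℕ):ℤ) - 1) = 0 by omega,
        show ((n:ℤ) - max ((i:ℕ):ℤ) ((j:ℕ):ℤ) - 2) = -1 by omega,
        qnum_zero, qnum_neg 1, qnum_one]
    ring_nf
  · ring_nf

/-! the rational side -/

def Czq (n : ℕ) (j t : ℤ) : ℚ := ((min t j : ℤ) : ℚ) + 1

lemma masterCq (n : ℕ) (i j : ℤ) (hi0 : 0 ≤ i) (hi : i < n) (hj0 : 0 ≤ j) (hj : j < n) :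
    2 * Czq n j i - Czq n j (i+1) - Czq n j (i-1) = if i = j then 1 else 0 := by
  unfold Czq
  have hz : (2 * (min i j + 1) - (min (i+1) j + 1) - (min (i-1) j + 1) : ℤ)
      = if i = j then 1 else 0 := by
    split_ifs <;> omega
  have e : (2:ℚ) * (((min i j : ℤ):ℚ)+1) - (((min (i+1) j : ℤ):ℚ)+1) - (((min (i-1) j : ℤ):ℚ)+1)
      = ((2 * (min i j + 1) - (min (i+1) j + 1) - (min (i-1) j + 1) : ℤ) : ℚ) := by
    push_cast; ring
  rw [e, hz]
  split_ifs <;> norm_num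

theorem statement14 (n : ℕ) (hn : 1 ≤ n) :
    (Matrix.of fun i j : Fin n => (symB n i j : ℚ)) * Matrix.of (BinvB n) = 1 ∧
    Matrix.of (BinvB n) * (Matrix.of fun i j : Fin n => (symB n i j : ℚ)) = 1 ∧
    (Matrix.of fun i j : Fin n => qnum (symB n i j)) * Matrix.of (BtqB n) = 1 ∧
    Matrix.of (BtqB n) * (Matrix.of fun i j : Fin n => qnum (symB n i j)) = 1 := by
  have hsymB : ∀ i j : Fin n, symB n i j = symB n j i := by
    intro i j
    unfold symB
    by_cases h : i = j
    · subst h; simp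
    · rw [if_neg h, if_neg (show ¬(j = i) from fun hc => h (hc.symm))]
      exact if_congr or_comm rfl rfl
  have hBinv_symm : ∀ i j : Fin n, BinvB n i j = BinvB n j i := by
    intro i j; unfold BinvB; rw [min_comm]
  have hBtq_symm : ∀ i j : Fin n, BtqB n i j = BtqB n j i := by
    intro i j; unfold BtqB; rw [min_comm, max_comm]
  -- rational product
  have key1 : (Matrix.of fun i j : Fin n => (symB n i j : ℚ)) * Matrix.of (BinvB n) = 1 := by
    ext i j
    rw [Matrix.mul_apply]
    simp only [Matrix.of_apply]
    have hB : ∀ k : Fin n, BinvB n k j = Czq n (j:ℤ) (k:ℤ) := by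
      intro k
      unfold BinvB Czq
      rw [min_comm (k:ℤ)]
      push_cast [Nat.cast_min]
      ring_nf
      rw [min_comm]
    rw [Finset.sum_congr rfl (fun k _ => by rw [hB k])]
    rw [sum_tri (fun m : ℤ => (m : ℚ)) (by norm_num) (by norm_num) n (Czq n (j:ℤ))
      (by unfold Czq; rw [min_eq_left (by omega)]; norm_num)
      (by unfold Czq; rw [min_eq_right (by omega), min_eq_right (by omega)]; norm_num) i]
    push_cast
    rw [masterCq n (i:ℤ) (j:ℤ) (by omega) (by omega) (by omega) (by omega)]
    rw [Matrix.one_apply]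
    by_cases h : i = j
    · rw [if_pos h, if_pos (by exact_mod_cast congrArg (fun t : Fin n => ((t:ℕ):ℤ)) h)]
    · rw [if_neg h, if_neg (fun hc => h (by
        apply Fin.ext
        exact_mod_cast hc))]
  have key2 : (Matrix.of fun i j : Fin n => qnum (symB n i j)) * Matrix.of (BtqB n) = 1 := by
    ext i j
    rw [Matrix.mul_apply]
    simp only [Matrix.of_apply]
    rw [Finset.sum_congr rfl (fun k _ => by rw [BtqB_eq_Cz n k j])]
    rw [sum_tri qnum qnum_zero (by rw [qnum_neg 1, qnum_one]) n (Cz n (j:ℤ))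
      (Cz_neg_one n (j:ℤ) (by omega))
      (by rw [Cz_top n (j:ℤ) (by omega)]) i]
    rw [masterC n hn (i:ℤ) (j:ℤ) (by omega) (by omega)]
    rw [Matrix.one_apply]
    by_cases h : i = j
    · rw [if_pos h, if_pos (by exact_mod_cast congrArg (fun t : Fin n => ((t:ℕ):ℤ)) h)]
    · rw [if_neg h, if_neg (fun hc => h (by
        apply Fin.ext
        exact_mod_cast hc))]
  refine ⟨key1, ?_, key2, ?_⟩
  · have := congrArg Matrix.transpose key1
    rw [Matrix.transpose_mul, Matrix.transpose_one] at this
    rw [← this]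
    congr 1 <;> ext i j <;>
      simp only [Matrix.transpose_apply, Matrix.of_apply]
    · exact (hBinv_symm i j)
    · exact_mod_cast congrArg (fun t : ℤ => (t : ℚ)) (hsymB i j)
  · have := congrArg Matrix.transpose key2
    rw [Matrix.transpose_mul, Matrix.transpose_one] at this
    rw [← this]
    congr 1 <;> ext i j <;>
      simp only [Matrix.transpose_apply, Matrix.of_apply]
    · exact (hBtq_symm i j)
    · exact congrArg qnum (hsymB i j)

end
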